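/- Fix μ > 0 and ε > 0. Then the limit, as t → 0⁺, of (1/(2π)) · ∫₀^ε ( ∫_ℝ cos(2xξ) · exp(−tμξ²) dξ ) dx equals 1/4. -/

import Mathlib

open MeasureTheory Real Filter Topology

lemma cos_gaussian_integral (b s : ℝ) (hb : 0 < b) :
    ∫ ξ : ℝ, Real.cos (s * ξ) * Real.exp (-b * ξ ^ 2)
      = Real.sqrt (π / b) * Real.exp (-s ^ 2 / (4 * b)) := by
  have hb' : (0:ℝ) < (b:ℂ).re := by simpa using hb
  have key := fourierIntegral_gaussian (b := (b:ℂ)) hb' (s:ℂ)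
  have heq : (fun x : ℝ => Complex.exp (Complex.I * s * x) * Complex.exp (-(b:ℂ) * x ^ 2))
      = fun x : ℝ => Complex.exp (-(b:ℂ) * x ^ 2 + Complex.I * s * x + 0) := by
    funext x
    rw [add_zero, Complex.exp_add]
    ring
  have hint : Integrable (fun x : ℝ => Complex.exp (Complex.I * s * x) * Complex.exp (-(b:ℂ) * x ^ 2)) := by
    rw [heq]; exact integrable_cexp_quadratic hb' (Complex.I * s) 0
  have hre : ∀ x : ℝ, (Complex.exp (Complex.I * s * x) * Complex.exp (-(b:ℂ) * x ^ 2)).re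
      = Real.cos (s * x) * Real.exp (-b * x ^ 2) := by
    intro x
    have h1 : Complex.exp (-(b:ℂ) * x ^ 2) = ((Real.exp (-b * x ^ 2) : ℝ) : ℂ) := by
      rw [Complex.ofReal_exp]; push_cast; ring_nf
    rw [h1, Complex.mul_re, Complex.ofReal_re, Complex.ofReal_im, mul_zero, sub_zero]
    congr 1
    have : Complex.I * s * x = ((s * x : ℝ) : ℂ) * Complex.I := by push_cast; ring
    rw [this, Complex.exp_ofReal_mul_I_re]
  calc ∫ ξ : ℝ, Real.cos (s * ξ) * Real.exp (-b * ξ ^ 2)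
      = ∫ ξ : ℝ, (Complex.exp (Complex.I * s * ξ) * Complex.exp (-(b:ℂ) * ξ ^ 2)).re := by
        simp_rw [hre]
    _ = (∫ ξ : ℝ, Complex.exp (Complex.I * s * ξ) * Complex.exp (-(b:ℂ) * ξ ^ 2)).re := by
        simpa using integral_re hint
    _ = Real.sqrt (π / b) * Real.exp (-s ^ 2 / (4 * b)) := by
        rw [key]
        have h2 : ((π : ℂ) / b) ^ (1 / 2 : ℂ) = ((Real.sqrt (π / b) : ℝ) : ℂ) := by
          rw [show ((π : ℂ) / b) = ((π / b : ℝ) : ℂ) by push_cast; ring,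
            show (1 / 2 : ℂ) = ((1 / 2 : ℝ) : ℂ) by norm_num,
            ← Complex.ofReal_cpow (by positivity)]
          norm_num [Real.sqrt_eq_rpow]
        have h3 : Complex.exp (-(s:ℂ) ^ 2 / (4 * b)) = ((Real.exp (-s ^ 2 / (4 * b)) : ℝ) : ℂ) := by
          rw [Complex.ofReal_exp]; push_cast; ring_nf
        rw [h2, h3, ← Complex.ofReal_mul, Complex.ofReal_re]

/-- Boundary-layer computation: for `μ > 0` and `ε > 0`,
`(1/(2π)) ∫₀^ε ∫_ℝ cos(2xξ) e^{-tμξ²} dξ dx → 1/4` as `t → 0⁺`. -/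
theorem stokes_stmt_6 (μ ε : ℝ) (hμ : 0 < μ) (hε : 0 < ε) :
    Tendsto
      (fun t : ℝ =>
        (1 / (2 * π)) *
          ∫ x in Set.Ioo (0 : ℝ) ε, ∫ ξ : ℝ, Real.cos (2 * x * ξ) * Real.exp (-t * μ * ξ ^ 2))
      (𝓝[>] 0) (𝓝 (1 / 4)) := by
  have hπ := Real.pi_pos
  have key : Tendsto (fun t : ℝ => (1/(2*π)) * Real.sqrt π *
      ∫ y in (0:ℝ)..(ε / Real.sqrt (t*μ)), Real.exp (-(1:ℝ) * y^2)) (𝓝[>] 0) (𝓝 (1/4)) := by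
    have hsq : Tendsto (fun t : ℝ => Real.sqrt (t*μ)) (𝓝[>] 0) (𝓝[>] 0) := by
      rw [tendsto_nhdsWithin_iff]
      constructor
      · have : Tendsto (fun t : ℝ => Real.sqrt (t*μ)) (𝓝 0) (𝓝 (Real.sqrt (0*μ))) :=
          (Real.continuous_sqrt.comp (continuous_id.mul continuous_const)).tendsto 0
        simpa using this.mono_left nhdsWithin_le_nhds
      · filter_upwards [self_mem_nhdsWithin] with t ht
        exact Real.sqrt_pos.mpr (mul_pos ht hμ)
    have h1 : Tendsto (fun t : ℝ => ε / Real.sqrt (t*μ)) (𝓝[>] 0) atTop := by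
      have : Tendsto (fun x : ℝ => ε / x) (𝓝[>] 0) atTop := by
        simpa [div_eq_mul_inv] using tendsto_inv_nhdsGT_zero.const_mul_atTop hε
      exact this.comp hsq
    have h2 := MeasureTheory.intervalIntegral_tendsto_integral_Ioi 0
      ((integrable_exp_neg_mul_sq one_pos).integrableOn) h1
    rw [integral_gaussian_Ioi] at h2
    have h3 := h2.const_mul ((1/(2*π)) * Real.sqrt π)
    convert h3 using 2
    rw [div_one, ← Real.sqrt_mul_self hπ.le]
    field_simp
    ring_nf; rw [Real.sq_sqrt (Real.sqrt_nonneg _)]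
  refine key.congr' ?_
  filter_upwards [self_mem_nhdsWithin] with t ht
  have hb : 0 < t * μ := mul_pos ht hμ
  have hsb : 0 < Real.sqrt (t*μ) := Real.sqrt_pos.mpr hb
  have inner : ∀ x : ℝ, (∫ ξ : ℝ, Real.cos (2 * x * ξ) * Real.exp (-t * μ * ξ ^ 2))
      = Real.sqrt (π / (t*μ)) * Real.exp (-x^2 / (t*μ)) := by
    intro x
    have := cos_gaussian_integral (t*μ) (2*x) hb
    rw [show (-(t*μ) : ℝ) = -t*μ by ring] at this
    rw [this]
    congr 1
    rw [show (-(2*x)^2 / (4*(t*μ)) : ℝ) = -x^2/(t*μ) by field_simp; ring]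
  calc (1/(2*π)) * Real.sqrt π * ∫ y in (0:ℝ)..(ε / Real.sqrt (t*μ)), Real.exp (-(1:ℝ) * y^2)
      = (1/(2*π)) * ∫ x in Set.Ioo (0:ℝ) ε, Real.sqrt (π / (t*μ)) * Real.exp (-x^2 / (t*μ)) := by
        rw [MeasureTheory.integral_const_mul]
        have hIoo : ∫ x in Set.Ioo (0:ℝ) ε, Real.exp (-x^2 / (t*μ))
            = ∫ x in (0:ℝ)..ε, Real.exp (-x^2 / (t*μ)) := by
          rw [intervalIntegral.integral_of_le hε.le, MeasureTheory.integral_Ioc_eq_integral_Ioo]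
        have hcomp : (fun x : ℝ => Real.exp (-x^2 / (t*μ)))
            = fun x : ℝ => Real.exp (-(1:ℝ) * ((Real.sqrt (t*μ))⁻¹ * x)^2) := by
          funext x
          congr 1
          rw [mul_pow, inv_pow, Real.sq_sqrt hb.le]
          field_simp
        have hsub := intervalIntegral.integral_comp_mul_left
          (fun y : ℝ => Real.exp (-(1:ℝ) * y^2)) (a := 0) (b := ε)
          (c := (Real.sqrt (t*μ))⁻¹) (by positivity)
        rw [hIoo, hcomp, hsub, inv_inv, mul_zero, smul_eq_mul]
        rw [show (Real.sqrt (t*μ))⁻¹ * ε = ε / Real.sqrt (t*μ) by field_simp]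
        rw [Real.sqrt_div' π hb.le]
        generalize (∫ y in (0:ℝ)..(ε / Real.sqrt (t*μ)), Real.exp (-(1:ℝ)*y^2)) = G
        rw [show Real.sqrt π / Real.sqrt (t*μ) * (Real.sqrt (t*μ) * G)
            = Real.sqrt π * G * (Real.sqrt (t*μ) / Real.sqrt (t*μ)) by ring,
          div_self hsb.ne', mul_one]
        ring
    _ = (1/(2*π)) * ∫ x in Set.Ioo (0:ℝ) ε, ∫ ξ : ℝ, Real.cos (2 * x * ξ) * Real.exp (-t * μ * ξ ^ 2) := by
        congr 1
        refine MeasureTheory.setIntegral_congr_fun measurableSet_Ioo fun x _ => ?_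
        exact (inner x).symm
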